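/- Let x₀ < x₁ and constants c₀ > 0, c₂ ≥ 0. Let g : [x₀,x₁] → ℝ be continuously differentiable with g ≥ c₀ and |g′| ≤ c₂ on [x₀,x₁], and set G(x) = ∫_{x₀}^x g(u) du. Let S : [x₀,x₁] → ℝ be continuously differentiable with sup_{x ∈ [x₀,x₁]} |G(x) − S(x)| ≤ ε. Then for all x ∈ [x₀,x₁], | ∫_{x₀}^x (g(u) − S′(u)) / g(u) du | ≤ ( 2/c₀ + c₂ (x₁ − x₀) / c₀² ) · ε. -/

import Mathlib

open MeasureTheory Set

/-- Integration-by-parts reduction in Lemma A.2: if `G(x) = ∫_{x₀}^x g` is uniformly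
`ε`-approximated by `S`, with `g ≥ c₀ > 0` and `|g'| ≤ c₂`, then
`|∫_{x₀}^x (g - S')/g du| ≤ (2/c₀ + c₂(x₁-x₀)/c₀²) ε` on `[x₀, x₁]`. -/
theorem stmt_10
    (x₀ x₁ : ℝ) (hx : x₀ < x₁) (c₀ c₂ : ℝ) (hc₀ : 0 < c₀) (hc₂ : 0 ≤ c₂)
    (g g' S S' : ℝ → ℝ)
    (hg : ∀ x ∈ Icc x₀ x₁, HasDerivWithinAt g (g' x) (Icc x₀ x₁) x)
    (hg'c : ContinuousOn g' (Icc x₀ x₁))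
    (hglb : ∀ x ∈ Icc x₀ x₁, c₀ ≤ g x)
    (hg'b : ∀ x ∈ Icc x₀ x₁, |g' x| ≤ c₂)
    (hS : ∀ x ∈ Icc x₀ x₁, HasDerivWithinAt S (S' x) (Icc x₀ x₁) x)
    (hS'c : ContinuousOn S' (Icc x₀ x₁))
    (ε : ℝ)
    (hε : ∀ x ∈ Icc x₀ x₁, |(∫ u in x₀..x, g u) - S x| ≤ ε) :
    ∀ x ∈ Icc x₀ x₁,
      |∫ u in x₀..x, (g u - S' u) / g u| ≤ (2 / c₀ + c₂ * (x₁ - x₀) / c₀ ^ 2) * ε := by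
  intro x hxm
  have hx0x : x₀ ≤ x := hxm.1
  have hsub : Icc x₀ x ⊆ Icc x₀ x₁ := Icc_subset_Icc_right hxm.2
  have huicc : uIcc x₀ x = Icc x₀ x := uIcc_of_le hx0x
  have hgc : ContinuousOn g (Icc x₀ x₁) := fun y hy => (hg y hy).continuousWithinAt
  have hSc : ContinuousOn S (Icc x₀ x₁) := fun y hy => (hS y hy).continuousWithinAt
  have hgne : ∀ y ∈ Icc x₀ x₁, g y ≠ 0 := fun y hy => ne_of_gt (lt_of_lt_of_le hc₀ (hglb y hy))
  have hε0 : 0 ≤ ε := le_trans (abs_nonneg _) (hε x₀ ⟨le_refl _, le_of_lt hx⟩)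
  -- F := G - S
  set F : ℝ → ℝ := fun y => (∫ u in x₀..y, g u) - S y with hF
  have hFb : ∀ y ∈ Icc x₀ x₁, |F y| ≤ ε := hε
  -- integrability of g on [x₀, x₁]
  have hgint : ∀ y ∈ Icc x₀ x₁, IntervalIntegrable g volume x₀ y := by
    intro y hy
    apply (hgc.mono _).intervalIntegrable
    rw [uIcc_of_le hy.1]
    exact Icc_subset_Icc_right hy.2
  -- F is continuous on Icc x₀ x₁
  have hFcont : ContinuousOn F (Icc x₀ x₁) := by
    apply ContinuousOn.sub _ hSc
    have := intervalIntegral.continuousOn_primitive_interval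
      (f := g) (μ := volume) (a := x₀) (b := x₁)
      (by rw [uIcc_of_le (le_of_lt hx)]
          exact (hgc.mono (by rfl)).integrableOn_compact isCompact_Icc)
    rwa [uIcc_of_le (le_of_lt hx)] at this
  -- integration by parts on [x₀, x]
  have hIBP := intervalIntegral.integral_deriv_mul_eq_sub_of_hasDerivAt
    (a := x₀) (b := x)
    (u := F) (v := fun y => (g y)⁻¹)
    (u' := fun y => g y - S' y) (v' := fun y => -g' y / g y ^ 2)
    (by rw [huicc]; exact hFcont.mono hsub)
    (by rw [huicc]
        exact ContinuousOn.inv₀ (hgc.mono hsub) (fun y hy => hgne y (hsub hy)))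
    (by intro y hy
        rw [min_eq_left hx0x, max_eq_right hx0x] at hy
        have hy' : y ∈ Ioo x₀ x₁ := ⟨hy.1, lt_of_lt_of_le hy.2 hxm.2⟩
        have hmem : Icc x₀ x₁ ∈ nhds y := Icc_mem_nhds hy'.1 hy'.2
        have hgat : HasDerivAt g (g' y) y := (hg y (Ioo_subset_Icc_self hy')).hasDerivAt hmem
        have hG : HasDerivAt (fun u => ∫ t in x₀..u, g t) (g y) y := by
          apply intervalIntegral.integral_hasDerivAt_right
            (hgint y (Ioo_subset_Icc_self hy'))
          · exact AEStronglyMeasurable.stronglyMeasurableAtFilter_of_mem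
              ((hgc.mono (by rfl)).aestronglyMeasurable measurableSet_Icc) hmem
          · exact hgat.continuousAt
        exact hG.sub ((hS y (Ioo_subset_Icc_self hy')).hasDerivAt hmem))
    (by intro y hy
        rw [min_eq_left hx0x, max_eq_right hx0x] at hy
        have hy' : y ∈ Ioo x₀ x₁ := ⟨hy.1, lt_of_lt_of_le hy.2 hxm.2⟩
        have hmem : Icc x₀ x₁ ∈ nhds y := Icc_mem_nhds hy'.1 hy'.2
        exact ((hg y (Ioo_subset_Icc_self hy')).hasDerivAt hmem).inv
          (hgne y (Ioo_subset_Icc_self hy')))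
    (by apply ContinuousOn.intervalIntegrable
        rw [huicc]
        exact (hgc.mono hsub).sub (hS'c.mono hsub))
    (by apply ContinuousOn.intervalIntegrable
        rw [huicc]
        exact ((hg'c.mono hsub).neg).div ((hgc.mono hsub).pow 2)
          (fun y hy => pow_ne_zero 2 (hgne y (hsub hy))))
  -- split the integral
  have hint1 : IntervalIntegrable (fun y => (g y - S' y) * (g y)⁻¹) volume x₀ x := by
    apply ContinuousOn.intervalIntegrable
    rw [huicc]
    exact ((hgc.mono hsub).sub (hS'c.mono hsub)).mul
      (ContinuousOn.inv₀ (hgc.mono hsub) (fun y hy => hgne y (hsub hy)))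
  have hint2 : IntervalIntegrable (fun y => F y * (-g' y / g y ^ 2)) volume x₀ x := by
    apply ContinuousOn.intervalIntegrable
    rw [huicc]
    exact (hFcont.mono hsub).mul
      (((hg'c.mono hsub).neg).div ((hgc.mono hsub).pow 2)
        (fun y hy => pow_ne_zero 2 (hgne y (hsub hy))))
  rw [intervalIntegral.integral_add hint1 hint2] at hIBP
  have hkey : (∫ u in x₀..x, (g u - S' u) / g u)
      = F x * (g x)⁻¹ - F x₀ * (g x₀)⁻¹ - ∫ y in x₀..x, F y * (-g' y / g y ^ 2) := by
    have : (∫ u in x₀..x, (g u - S' u) / g u)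
        = ∫ u in x₀..x, (g u - S' u) * (g u)⁻¹ := by
      apply intervalIntegral.integral_congr
      intro y hy
      simp [div_eq_mul_inv]
    rw [this]; linarith [hIBP]
  -- bounds
  have hinvb : ∀ y ∈ Icc x₀ x₁, |(g y)⁻¹| ≤ c₀⁻¹ := by
    intro y hy
    have hgy : 0 < g y := lt_of_lt_of_le hc₀ (hglb y hy)
    rw [abs_of_nonneg (inv_nonneg.mpr hgy.le)]
    exact inv_anti₀ hc₀ (hglb y hy)
  have b1 : |F x * (g x)⁻¹| ≤ ε / c₀ := by
    rw [abs_mul, div_eq_mul_inv]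
    exact mul_le_mul (hFb x hxm) (hinvb x hxm) (abs_nonneg _) hε0
  have hx₀m : x₀ ∈ Icc x₀ x₁ := ⟨le_refl _, le_of_lt hx⟩
  have b2 : |F x₀ * (g x₀)⁻¹| ≤ ε / c₀ := by
    rw [abs_mul, div_eq_mul_inv]
    exact mul_le_mul (hFb x₀ hx₀m) (hinvb x₀ hx₀m) (abs_nonneg _) hε0
  have b3 : |∫ y in x₀..x, F y * (-g' y / g y ^ 2)| ≤ ε * (c₂ / c₀ ^ 2) * |x - x₀| := by
    rw [← Real.norm_eq_abs]
    apply intervalIntegral.norm_integral_le_of_norm_le_const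
    intro y hy
    rw [uIoc_of_le hx0x] at hy
    have hym : y ∈ Icc x₀ x₁ := hsub (Ioc_subset_Icc_self hy)
    have hgy : 0 < g y := lt_of_lt_of_le hc₀ (hglb y hym)
    have h1 : |(-g' y / g y ^ 2)| ≤ c₂ / c₀ ^ 2 := by
      rw [abs_div, abs_neg, abs_of_nonneg (by positivity : (0:ℝ) ≤ g y ^ 2)]
      apply div_le_div₀ hc₂ (hg'b y hym) (by positivity)
      exact pow_le_pow_left₀ hc₀.le (hglb y hym) 2
    calc ‖F y * (-g' y / g y ^ 2)‖ = |F y| * |(-g' y / g y ^ 2)| := abs_mul _ _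
      _ ≤ ε * (c₂ / c₀ ^ 2) := mul_le_mul (hFb y hym) h1 (abs_nonneg _) hε0
  have habs : |x - x₀| = x - x₀ := abs_of_nonneg (by linarith)
  rw [habs] at b3
  have b3' : |∫ y in x₀..x, F y * (-g' y / g y ^ 2)| ≤ ε * (c₂ / c₀ ^ 2) * (x₁ - x₀) := by
    refine le_trans b3 (mul_le_mul_of_nonneg_left ?_ (by positivity))
    linarith [hxm.2]
  rw [hkey]
  have := abs_sub (F x * (g x)⁻¹ - F x₀ * (g x₀)⁻¹) (∫ y in x₀..x, F y * (-g' y / g y ^ 2))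
  have h2 := abs_sub (F x * (g x)⁻¹) (F x₀ * (g x₀)⁻¹)
  calc |F x * (g x)⁻¹ - F x₀ * (g x₀)⁻¹ - ∫ y in x₀..x, F y * (-g' y / g y ^ 2)|
      ≤ |F x * (g x)⁻¹ - F x₀ * (g x₀)⁻¹| + |∫ y in x₀..x, F y * (-g' y / g y ^ 2)| :=
        abs_sub _ _
    _ ≤ ε / c₀ + ε / c₀ + ε * (c₂ / c₀ ^ 2) * (x₁ - x₀) := by linarith
    _ = (2 / c₀ + c₂ * (x₁ - x₀) / c₀ ^ 2) * ε := by ring
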